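/- Let A be a matrix in M_n(R) over a ring R such that A is a finite sum of matrices of the following three types: (i) off-diagonal elementary matrices a·e_{ij} with i ≠ j, (ii) matrices of the form a·e_{ii} − a·e_{jj} with i ≠ j, (iii) a matrix a·e_{11} with a ∈ I² for an ideal I containing all entries. Then the trace of A lies in I². Conversely, every matrix A ∈ M_n(I) with tr(A) ∈ I² is such a finite sum. -/

import Mathlib

/-- Let `R` be a ring, `I` a two-sided ideal and `I²` the ideal of finite
sums of products of two elements of `I`.  A matrix `A ∈ M_n(R)` is a finite
sum of matrices of the three types
(i) off-diagonal matrices `a·e_{ij}`, `i ≠ j`, with `a ∈ I`,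
(ii) matrices `a·e_{ii} − a·e_{jj}`, `i ≠ j`, with `a ∈ I`, and
(iii) a matrix `a·e_{11}` with `a ∈ I²`,
if and only if all entries of `A` lie in `I` and `tr(A) ∈ I²`. -/
theorem matrix_trace_in_square_ideal_decomposition
    {R : Type*} [Ring R] (I : Set R)
    (hI0 : (0 : R) ∈ I)
    (hIadd : ∀ x ∈ I, ∀ y ∈ I, x + y ∈ I)
    (hIneg : ∀ x ∈ I, -x ∈ I)
    (hIl : ∀ r : R, ∀ x ∈ I, r * x ∈ I)
    (hIr : ∀ x ∈ I, ∀ r : R, x * r ∈ I)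
    (n : ℕ) [NeZero n] (A : Matrix (Fin n) (Fin n) R) :
    A ∈ AddSubgroup.closure
        ({M | ∃ i j : Fin n, i ≠ j ∧ ∃ a ∈ I, M = Matrix.single i j a} ∪
         {M | ∃ i j : Fin n, i ≠ j ∧ ∃ a ∈ I,
            M = Matrix.single i i a - Matrix.single j j a} ∪
         {M | ∃ a ∈ (AddSubgroup.closure {z : R | ∃ x ∈ I, ∃ y ∈ I, z = x * y} : AddSubgroup R),
            M = Matrix.single 0 0 a}) ↔
      ((∀ i j, A i j ∈ I) ∧
        Matrix.trace A ∈
          (AddSubgroup.closure {z : R | ∃ x ∈ I, ∃ y ∈ I, z = x * y} : AddSubgroup R)) := by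
  set J : AddSubgroup R := AddSubgroup.closure {z : R | ∃ x ∈ I, ∃ y ∈ I, z = x * y} with hJ
  set I' : AddSubgroup R :=
    { carrier := I
      add_mem' := fun ha hb => hIadd _ ha _ hb
      zero_mem' := hI0
      neg_mem' := fun ha => hIneg _ ha } with hI'
  have hJI : ∀ a ∈ J, a ∈ I := by
    have : J ≤ I' := (AddSubgroup.closure_le I').2 (by
      rintro z ⟨x, hx, y, hy, rfl⟩
      exact hIl x y hy)
    exact fun a ha => this ha
  have happ : ∀ (i j k l : Fin n) (a : R), a ∈ I → Matrix.single i j a k l ∈ I := by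
    intro i j k l a ha
    by_cases h : i = k ∧ j = l
    · rw [h.1, h.2, Matrix.single_apply_same]; exact ha
    · rw [Matrix.single_apply_of_ne (h := h)]; exact hI0
  constructor
  · intro hA
    set P : AddSubgroup (Matrix (Fin n) (Fin n) R) :=
      { carrier := {B | (∀ i j, B i j ∈ I) ∧ Matrix.trace B ∈ J}
        add_mem' := by
          rintro B C ⟨hB1, hB2⟩ ⟨hC1, hC2⟩
          refine ⟨fun i j => hIadd _ (hB1 i j) _ (hC1 i j), ?_⟩
          rw [Matrix.trace_add]; exact J.add_mem hB2 hC2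
        zero_mem' := ⟨fun i j => hI0, by rw [Matrix.trace_zero]; exact J.zero_mem⟩
        neg_mem' := by
          rintro B ⟨hB1, hB2⟩
          refine ⟨fun i j => hIneg _ (hB1 i j), ?_⟩
          rw [Matrix.trace_neg]; exact J.neg_mem hB2 }
    refine (AddSubgroup.closure_le P).2 ?_ hA
    rintro M ((⟨i, j, hij, a, ha, rfl⟩ | ⟨i, j, hij, a, ha, rfl⟩) | ⟨a, ha, rfl⟩)
    · refine ⟨fun k l => happ _ _ _ _ _ ha, ?_⟩
      rw [Matrix.trace_single_eq_of_ne (h := hij)]; exact J.zero_mem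
    · refine ⟨fun k l => ?_, ?_⟩
      · rw [Matrix.sub_apply, sub_eq_add_neg]
        exact hIadd _ (happ _ _ _ _ _ ha) _ (hIneg _ (happ _ _ _ _ _ ha))
      · rw [Matrix.trace_sub, Matrix.trace_single_eq_same, Matrix.trace_single_eq_same,
          sub_self]
        exact J.zero_mem
    · exact ⟨fun k l => happ _ _ _ _ _ (hJI a ha), by
        rw [Matrix.trace_single_eq_same]; exact ha⟩
  · rintro ⟨h1, h2⟩
    set S := AddSubgroup.closure
        ({M | ∃ i j : Fin n, i ≠ j ∧ ∃ a ∈ I, M = Matrix.single i j a} ∪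
         {M | ∃ i j : Fin n, i ≠ j ∧ ∃ a ∈ I,
            M = Matrix.single i i a - Matrix.single j j a} ∪
         {M | ∃ a ∈ J, M = Matrix.single 0 0 a}) with hS
    have hsum00 :
        ∑ i : Fin n, Matrix.single (0 : Fin n) 0 (A i i) =
          Matrix.single (0 : Fin n) 0 (∑ i : Fin n, A i i) := by
      ext k l
      simp only [Matrix.sum_apply, Matrix.single, Matrix.of_apply]
      split <;> simp
    have eX : (∑ i : Fin n, ∑ j : Fin n,
          if i = j then 0 else Matrix.single i j (A i j)) =
        (∑ i : Fin n, ∑ j : Fin n, Matrix.single i j (A i j)) -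
          ∑ i : Fin n, Matrix.single i i (A i i) := by
      rw [← Finset.sum_sub_distrib]
      refine Finset.sum_congr rfl fun i _ => ?_
      have h : ∀ j : Fin n, (if i = j then 0 else Matrix.single i j (A i j)) =
          Matrix.single i j (A i j) -
            (if i = j then Matrix.single i j (A i j) else 0) := by
        intro j; split <;> simp
      rw [Finset.sum_congr rfl fun j _ => h j, Finset.sum_sub_distrib, Finset.sum_ite_eq,
        if_pos (Finset.mem_univ i)]
    have eY : (∑ i : Fin n, if i = 0 then 0 else
          (Matrix.single i i (A i i) - Matrix.single (0 : Fin n) 0 (A i i))) =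
        (∑ i : Fin n, Matrix.single i i (A i i)) -
          Matrix.single (0 : Fin n) 0 (Matrix.trace A) := by
      have h : ∀ i : Fin n, (if i = 0 then 0 else
          (Matrix.single i i (A i i) - Matrix.single (0 : Fin n) 0 (A i i))) =
          Matrix.single i i (A i i) - Matrix.single (0 : Fin n) 0 (A i i) := by
        intro i
        split
        · next hi => subst hi; simp
        · rfl
      rw [Finset.sum_congr rfl fun i _ => h i, Finset.sum_sub_distrib]
      congr 1
      ext k l
      simp only [Matrix.sum_apply, Matrix.single, Matrix.of_apply, Matrix.trace,
        Matrix.diag]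
      split <;> simp
    have key : A =
        (∑ i : Fin n, ∑ j : Fin n,
          if i = j then 0 else Matrix.single i j (A i j)) +
        (∑ i : Fin n, if i = 0 then 0 else
          (Matrix.single i i (A i i) - Matrix.single (0 : Fin n) 0 (A i i))) +
        Matrix.single (0 : Fin n) 0 (Matrix.trace A) := by
      rw [eX, eY, ← Matrix.matrix_eq_sum_single A]
      abel
    rw [key]
    refine S.add_mem (S.add_mem ?_ ?_) ?_
    · refine AddSubgroup.sum_mem _ fun i _ => AddSubgroup.sum_mem _ fun j _ => ?_
      by_cases h : i = j
      · rw [if_pos h]; exact S.zero_mem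
      · rw [if_neg h]
        exact AddSubgroup.subset_closure (Or.inl (Or.inl ⟨i, j, h, A i j, h1 i j, rfl⟩))
    · refine AddSubgroup.sum_mem _ fun i _ => ?_
      by_cases h : i = 0
      · rw [if_pos h]; exact S.zero_mem
      · rw [if_neg h]
        exact AddSubgroup.subset_closure (Or.inl (Or.inr ⟨i, 0, h, A i i, h1 i i, rfl⟩))
    · exact AddSubgroup.subset_closure (Or.inr ⟨Matrix.trace A, h2, rfl⟩)
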